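/- For all real numbers α and b with 0 < α ≤ 1/8 and b ≥ 5·ln(1/α), one has 2·α + binEntropy(α) − b·α ≤ −2·α·ln(1/α). -/

import Mathlib

/-- **Exponent inequality for the truncated Metropolis–Hastings tail bound.**
For `0 < α ≤ 1/8` and `b ≥ 5·ln(1/α)`, `2·α + binEntropy(α) − b·α ≤ −2·α·ln(1/α)`. -/
theorem gibbs_tail_exponent (α b : ℝ) (h0 : 0 < α) (h1 : α ≤ 1 / 8)
    (hb : b ≥ 5 * Real.log (1 / α)) :
    2 * α + Real.binEntropy α - b * α ≤ -(2 * α * Real.log (1 / α)) := by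
  set L := Real.log (1 / α) with hL
  have hα1 : α < 1 := by linarith
  have h1α : (0:ℝ) < 1 - α := by linarith
  -- L ≥ 3/2
  have hL8 : Real.log 8 ≤ L := by
    apply Real.log_le_log (by norm_num)
    rw [le_div_iff₀ h0]; linarith
  have hlog2 : (0.6931471803:ℝ) < Real.log 2 := Real.log_two_gt_d9
  have h8 : Real.log 8 = 3 * Real.log 2 := by
    rw [show (8:ℝ) = 2 ^ 3 by norm_num, Real.log_pow]; push_cast; ring
  have hL32 : (3/2:ℝ) ≤ L := by rw [h8] at hL8; linarith
  -- binEntropy bound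
  have hlogα : Real.log α = -L := by
    rw [hL, Real.log_div one_ne_zero (ne_of_gt h0), Real.log_one]; ring
  have hkey : Real.log (1 / (1 - α)) ≤ 1 / (1 - α) - 1 :=
    Real.log_le_sub_one_of_pos (by positivity)
  have hlog1α : -Real.log (1 - α) ≤ α / (1 - α) := by
    rw [Real.log_div one_ne_zero (ne_of_gt h1α), Real.log_one] at hkey
    have : 1 / (1 - α) - 1 = α / (1 - α) := by field_simp; ring
    linarith [hkey.trans_eq this]
  have hbe : Real.binEntropy α ≤ α * L + α := by
    rw [Real.binEntropy, Real.log_inv, Real.log_inv, hlogα]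
    have h2 : (1 - α) * (-Real.log (1 - α)) ≤ α := by
      calc (1 - α) * (-Real.log (1 - α)) ≤ (1 - α) * (α / (1 - α)) := by
            apply mul_le_mul_of_nonneg_left hlog1α h1α.le
        _ = α := by field_simp
    nlinarith
  have hbα : 5 * L * α ≤ b * α := mul_le_mul_of_nonneg_right hb h0.le
  nlinarith
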